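/- Let n ≥ 1 and let λ, λ̃ ∈ ℝ^{n+1} be vectors of positive rates with λ̃_i ≥ λ_i for all i = 0,...,n and λ̃_k > λ_k for at least one index k. Then the largest eigenvalue of the symmetric Jacobi matrix A(λ̃) is strictly smaller than the largest eigenvalue of the symmetric Jacobi matrix A(λ). -/

import Mathlib

open scoped BigOperators

/-- Extended occupancy vector of an RFM chain with `N + 1` sites:
the input value `u` at the left boundary, the state in the middle,
and `0` at the right boundary. -/
noncomputable def rfmExt {N : ℕ} (u : ℝ) (x : Fin (N + 1) → ℝ) : Fin (N + 3) → ℝ :=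
  Fin.cons u (Fin.snoc x 0)

/-- The flow into site `j` (so `j = 0` is the entry flow `λ₀ u (1 - x₁)`,
`j` internal is `λ_j x_j (1 - x_{j+1})` in 1-based notation,
and `j = N + 1` is the exit flow `λ_n x_n`). -/
noncomputable def rfmFlow {N : ℕ} (lam : Fin (N + 2) → ℝ) (u : ℝ)
    (x : Fin (N + 1) → ℝ) (j : Fin (N + 2)) : ℝ :=
  lam j * rfmExt u x j.castSucc * (1 - rfmExt u x j.succ)

/-- The vector field of a single RFMIO chain with input `u`. -/
noncomputable def rfmVF {N : ℕ} (lam : Fin (N + 2) → ℝ) (u : ℝ)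
    (x : Fin (N + 1) → ℝ) (j : Fin (N + 1)) : ℝ :=
  rfmFlow lam u x j.castSucc - rfmFlow lam u x j.succ

/-- The steady-state equations of an RFM chain with input `u`: all flows are equal,
i.e. `λ₀ u (1-e₁) = λ₁ e₁ (1-e₂) = ⋯ = λ_n e_n`. -/
def rfmSS {N : ℕ} (lam : Fin (N + 2) → ℝ) (u : ℝ) (e : Fin (N + 1) → ℝ) : Prop :=
  ∀ j : Fin (N + 1), rfmFlow lam u e j.castSucc = rfmFlow lam u e j.succ

/-- The off-diagonal entry `λ_j^{-1/2}` of the Jacobi matrix (0-based rate index),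
defined for all natural `j` for convenience. -/
noncomputable def jacobiEntry {N : ℕ} (lam : Fin (N + 2) → ℝ) (j : ℕ) : ℝ :=
  if h : j < N + 2 then (Real.sqrt (lam ⟨j, h⟩))⁻¹ else 0

/-- The `(n+2) × (n+2)` symmetric tridiagonal Jacobi matrix associated with an RFM
with `n = N + 1` sites and rates `λ₀, …, λ_n`: zero diagonal and off-diagonal entries
`A_{i,i+1} = A_{i+1,i} = λ_{i-1}^{-1/2}` (1-based indexing). -/
noncomputable def jacobiMat {N : ℕ} (lam : Fin (N + 2) → ℝ) :
    Matrix (Fin (N + 3)) (Fin (N + 3)) ℝ :=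
  fun p q =>
    if (p : ℕ) + 1 = (q : ℕ) then jacobiEntry lam p
    else if (q : ℕ) + 1 = (p : ℕ) then jacobiEntry lam q
    else 0

section Helpers

open Matrix Finset

/-! ### Generic spectral helpers for real symmetric matrices -/

variable {n : ℕ} {M : Matrix (Fin n) (Fin n) ℝ}

private lemma dot_inner (x y : EuclideanSpace ℝ (Fin n)) :
    (inner ℝ x y : ℝ) = (x : Fin n → ℝ) ⬝ᵥ (y : Fin n → ℝ) := by
  simp [PiLp.inner_apply, dotProduct, RCLike.inner_apply, mul_comm]

private lemma parseval (hM : M.IsHermitian) (x y : Fin n → ℝ) :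
    ∑ i, ((x ⬝ᵥ ⇑(hM.eigenvectorBasis i)) * (⇑(hM.eigenvectorBasis i) ⬝ᵥ y)) = x ⬝ᵥ y := by
  have := hM.eigenvectorBasis.sum_inner_mul_inner (WithLp.toLp 2 x : EuclideanSpace ℝ (Fin n))
    (WithLp.toLp 2 y : EuclideanSpace ℝ (Fin n))
  simpa [dot_inner] using this

private lemma bdotMx (hM : M.IsHermitian) (x : Fin n → ℝ) (i : Fin n) :
    (⇑(hM.eigenvectorBasis i) : Fin n → ℝ) ⬝ᵥ (M *ᵥ x) =
      hM.eigenvalues i * ((⇑(hM.eigenvectorBasis i) : Fin n → ℝ) ⬝ᵥ x) := by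
  rw [dotProduct_mulVec, ← Matrix.mulVec_transpose]
  have ht : Mᵀ = M := by
    have := hM; rwa [Matrix.IsHermitian, conjTranspose_eq_transpose_of_trivial] at this
  rw [ht, hM.mulVec_eigenvectorBasis, smul_dotProduct, smul_eq_mul]

private lemma eigenvalues_le (hM : M.IsHermitian) (σ : ℝ)
    (hmax : ∀ μ : ℝ, Module.End.HasEigenvalue (Matrix.toLin' M) μ → μ ≤ σ) (i : Fin n) :
    hM.eigenvalues i ≤ σ := by
  apply hmax
  apply Module.End.hasEigenvalue_of_hasEigenvector (x := ⇑(hM.eigenvectorBasis i))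
  refine ⟨?_, fun h => hM.eigenvectorBasis.orthonormal.ne_zero i
    (by simpa using congrArg (WithLp.toLp 2) h)⟩
  rw [Module.End.mem_eigenspace_iff, Matrix.toLin'_apply, hM.mulVec_eigenvectorBasis]

private lemma quad_eq (hM : M.IsHermitian) (x : Fin n → ℝ) :
    x ⬝ᵥ (M *ᵥ x) = ∑ i, hM.eigenvalues i *
      ((⇑(hM.eigenvectorBasis i) : Fin n → ℝ) ⬝ᵥ x) ^ 2 := by
  rw [← parseval hM x (M *ᵥ x)]
  refine Finset.sum_congr rfl fun i _ => ?_
  rw [bdotMx hM x i, dotProduct_comm x]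
  ring

private lemma norm_eq (hM : M.IsHermitian) (x : Fin n → ℝ) :
    x ⬝ᵥ x = ∑ i, ((⇑(hM.eigenvectorBasis i) : Fin n → ℝ) ⬝ᵥ x) ^ 2 := by
  rw [← parseval hM x x]
  refine Finset.sum_congr rfl fun i _ => ?_
  rw [dotProduct_comm x]; ring

/-- Rayleigh upper bound. -/
private lemma rayleigh_le (hM : M.IsHermitian) (σ : ℝ)
    (hmax : ∀ μ : ℝ, Module.End.HasEigenvalue (Matrix.toLin' M) μ → μ ≤ σ) (x : Fin n → ℝ) :
    x ⬝ᵥ (M *ᵥ x) ≤ σ * (x ⬝ᵥ x) := by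
  rw [quad_eq hM x, norm_eq hM x, Finset.mul_sum]
  refine Finset.sum_le_sum fun i _ => ?_
  exact mul_le_mul_of_nonneg_right (eigenvalues_le hM σ hmax i) (sq_nonneg _)

/-- Equality case: a Rayleigh maximizer is an eigenvector. -/
private lemma rayleigh_eq_eigen (hM : M.IsHermitian) (σ : ℝ)
    (hmax : ∀ μ : ℝ, Module.End.HasEigenvalue (Matrix.toLin' M) μ → μ ≤ σ) (x : Fin n → ℝ)
    (heq : x ⬝ᵥ (M *ᵥ x) = σ * (x ⬝ᵥ x)) :
    M *ᵥ x = σ • x := by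
  have hterm : ∀ i ∈ Finset.univ, (σ - hM.eigenvalues i) *
      ((⇑(hM.eigenvectorBasis i) : Fin n → ℝ) ⬝ᵥ x) ^ 2 = 0 := by
    have hsum : ∑ i, (σ - hM.eigenvalues i) *
        ((⇑(hM.eigenvectorBasis i) : Fin n → ℝ) ⬝ᵥ x) ^ 2 = 0 := by
      have h1 := quad_eq hM x
      have h2 := norm_eq hM x
      simp only [sub_mul]
      rw [Finset.sum_sub_distrib, ← Finset.mul_sum, ← h2, ← h1, heq, sub_self]
    refine (Finset.sum_eq_zero_iff_of_nonneg fun i _ => ?_).mp hsum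
    exact mul_nonneg (sub_nonneg.mpr (eigenvalues_le hM σ hmax i)) (sq_nonneg _)
  set z : Fin n → ℝ := M *ᵥ x - σ • x with hz
  have hzdot : z ⬝ᵥ z = 0 := by
    rw [← parseval hM z z]
    refine Finset.sum_eq_zero fun i _ => ?_
    have hbz : (⇑(hM.eigenvectorBasis i) : Fin n → ℝ) ⬝ᵥ z = (hM.eigenvalues i - σ) *
        ((⇑(hM.eigenvectorBasis i) : Fin n → ℝ) ⬝ᵥ x) := by
      rw [hz, dotProduct_sub, bdotMx hM x i, dotProduct_smul, smul_eq_mul]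
      ring
    rw [dotProduct_comm z, hbz]
    have h0 := hterm i (Finset.mem_univ i)
    linear_combination (σ - hM.eigenvalues i) * h0
  have hz0 : z = 0 := by
    funext p
    have hnn : ∀ q ∈ Finset.univ, (0:ℝ) ≤ z q * z q := fun q _ => mul_self_nonneg _
    have h1 := (Finset.sum_eq_zero_iff_of_nonneg hnn).mp hzdot p (Finset.mem_univ p)
    have h2 := mul_self_eq_zero.mp h1
    simpa using h2
  have := sub_eq_zero.mp hz0
  exact this

end Helpers

section JacobiHelpers

open Matrix

variable {N : ℕ}

private lemma jacobiMat_isHermitian (lam : Fin (N + 2) → ℝ) : (jacobiMat lam).IsHermitian := by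
  ext p q
  simp only [Matrix.conjTranspose_apply, star_trivial, jacobiMat]
  by_cases h1 : (q : ℕ) + 1 = (p : ℕ)
  · have h2 : ¬((p : ℕ) + 1 = (q : ℕ)) := by omega
    simp [h1, h2]
  · by_cases h2 : (p : ℕ) + 1 = (q : ℕ)
    · simp [h1, h2]
    · simp [h1, h2]

private lemma jacobiEntry_nonneg (lam : Fin (N + 2) → ℝ) (j : ℕ) : 0 ≤ jacobiEntry lam j := by
  unfold jacobiEntry
  split
  · positivity
  · exact le_refl 0

private lemma jacobiEntry_pos (lam : Fin (N + 2) → ℝ) (hlam : ∀ j, 0 < lam j) (j : ℕ)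
    (h : j < N + 2) : 0 < jacobiEntry lam j := by
  unfold jacobiEntry
  rw [dif_pos h]
  have := hlam ⟨j, h⟩
  positivity

private lemma jacobiEntry_anti (lam lamt : Fin (N + 2) → ℝ) (hlam : ∀ j, 0 < lam j)
    (hle : ∀ j, lam j ≤ lamt j) (j : ℕ) : jacobiEntry lamt j ≤ jacobiEntry lam j := by
  unfold jacobiEntry
  split
  · next h =>
    have h1 := hlam ⟨j, h⟩
    have h2 := hle ⟨j, h⟩
    have hs1 : 0 < Real.sqrt (lam ⟨j, h⟩) := Real.sqrt_pos.mpr h1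
    exact inv_anti₀ hs1 (Real.sqrt_le_sqrt h2)
  · exact le_refl _

private lemma jacobiMat_nonneg (lam : Fin (N + 2) → ℝ) (p q : Fin (N + 3)) :
    0 ≤ jacobiMat lam p q := by
  unfold jacobiMat
  split
  · exact jacobiEntry_nonneg lam p
  · split
    · exact jacobiEntry_nonneg lam q
    · exact le_refl 0

private lemma jacobiMat_le (lam lamt : Fin (N + 2) → ℝ) (hlam : ∀ j, 0 < lam j)
    (hle : ∀ j, lam j ≤ lamt j) (p q : Fin (N + 3)) :
    jacobiMat lamt p q ≤ jacobiMat lam p q := by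
  unfold jacobiMat
  split
  · exact jacobiEntry_anti lam lamt hlam hle p
  · split
    · exact jacobiEntry_anti lam lamt hlam hle q
    · exact le_refl 0

end JacobiHelpers

/-- If the rates `λ̃` dominate the rates `λ` componentwise with a
strict increase in at least one component, then the largest eigenvalue of `A(λ̃)` is
strictly smaller than the largest eigenvalue of `A(λ)`. -/
theorem perron_root_strictly_decreasing_in_rates
    (N : ℕ) (lam lamt : Fin (N + 2) → ℝ)
    (hlam : ∀ j, 0 < lam j) (hlamt : ∀ j, 0 < lamt j)
    (hle : ∀ j, lam j ≤ lamt j) (hlt : ∃ k, lam k < lamt k)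
    (σ σt : ℝ)
    (hσeig : Module.End.HasEigenvalue (Matrix.toLin' (jacobiMat lam)) σ)
    (hσmax : ∀ μ : ℝ, Module.End.HasEigenvalue (Matrix.toLin' (jacobiMat lam)) μ → μ ≤ σ)
    (hσteig : Module.End.HasEigenvalue (Matrix.toLin' (jacobiMat lamt)) σt)
    (hσtmax : ∀ μ : ℝ, Module.End.HasEigenvalue (Matrix.toLin' (jacobiMat lamt)) μ → μ ≤ σt) :
    σt < σ := by
  classical
  open Matrix Finset in
  set M := jacobiMat lam with hMdef
  set Mt := jacobiMat lamt with hMtdef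
  have hMt : Mt.IsHermitian := jacobiMat_isHermitian lamt
  -- eigenvector of Mt for σt
  obtain ⟨v, hv⟩ := hσteig.exists_hasEigenvector
  have hveq : Mt *ᵥ v = σt • v := by
    have := hv.apply_eq_smul
    rwa [Matrix.toLin'_apply] at this
  have hvne : v ≠ 0 := hv.2
  set w : Fin (N + 3) → ℝ := fun i => |v i| with hwdef
  have hw0 : ∀ i, 0 ≤ w i := fun i => abs_nonneg _
  -- quadratic form expansion helper
  have quad : ∀ (A : Matrix (Fin (N + 3)) (Fin (N + 3)) ℝ) (x y : Fin (N + 3) → ℝ),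
      x ⬝ᵥ (A *ᵥ y) = ∑ p, ∑ q, A p q * x p * y q := by
    intro A x y
    simp only [dotProduct, Matrix.mulVec, Finset.mul_sum]
    exact Finset.sum_congr rfl fun p _ => Finset.sum_congr rfl fun q _ => by ring
  have hww_vv : w ⬝ᵥ w = v ⬝ᵥ v := by
    simp only [dotProduct, hwdef]
    exact Finset.sum_congr rfl fun i _ => by rw [← abs_mul, abs_mul_self]
  have step1 : v ⬝ᵥ (Mt *ᵥ v) = σt * (v ⬝ᵥ v) := by
    rw [hveq, dotProduct_smul, smul_eq_mul]
  have step3 : v ⬝ᵥ (Mt *ᵥ v) ≤ w ⬝ᵥ (Mt *ᵥ w) := by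
    rw [quad, quad]
    refine Finset.sum_le_sum fun p _ => Finset.sum_le_sum fun q _ => ?_
    have h1 : v p * v q ≤ w p * w q := by
      rw [hwdef, ← abs_mul]; exact le_abs_self _
    have h2 : 0 ≤ Mt p q := jacobiMat_nonneg lamt p q
    calc Mt p q * v p * v q = Mt p q * (v p * v q) := by ring
      _ ≤ Mt p q * (w p * w q) := mul_le_mul_of_nonneg_left h1 h2
      _ = Mt p q * w p * w q := by ring
  have step4 : w ⬝ᵥ (Mt *ᵥ w) ≤ σt * (w ⬝ᵥ w) := rayleigh_le hMt σt hσtmax w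
  have heqw : w ⬝ᵥ (Mt *ᵥ w) = σt * (w ⬝ᵥ w) := by
    refine le_antisymm step4 ?_
    calc σt * (w ⬝ᵥ w) = σt * (v ⬝ᵥ v) := by rw [hww_vv]
      _ = v ⬝ᵥ (Mt *ᵥ v) := step1.symm
      _ ≤ w ⬝ᵥ (Mt *ᵥ w) := step3
  have hweig : Mt *ᵥ w = σt • w := rayleigh_eq_eigen hMt σt hσtmax w heqw
  -- zero propagation
  have hzero : ∀ p : Fin (N + 3), w p = 0 → ∀ q : Fin (N + 3), Mt p q * w q = 0 := by
    intro p hp q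
    have hsum : ∑ q, Mt p q * w q = 0 := by
      have : (Mt *ᵥ w) p = σt * w p := by rw [hweig]; rfl
      rw [hp, mul_zero] at this
      simpa [Matrix.mulVec, dotProduct] using this
    have hnn : ∀ q ∈ Finset.univ, (0:ℝ) ≤ Mt p q * w q :=
      fun q _ => mul_nonneg (jacobiMat_nonneg lamt p q) (hw0 q)
    exact (Finset.sum_eq_zero_iff_of_nonneg hnn).mp hsum q (Finset.mem_univ q)
  -- adjacent entries of Mt are positive
  have hadj1 : ∀ (m : ℕ) (h : m + 1 < N + 3),
      0 < Mt ⟨m, by omega⟩ ⟨m + 1, h⟩ := by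
    intro m h
    have : Mt ⟨m, by omega⟩ ⟨m + 1, h⟩ = jacobiEntry lamt m := by
      simp [hMtdef, jacobiMat]
    rw [this]
    exact jacobiEntry_pos lamt hlamt m (by omega)
  have hadj2 : ∀ (m : ℕ) (h : m + 1 < N + 3),
      0 < Mt ⟨m + 1, h⟩ ⟨m, by omega⟩ := by
    intro m h
    have h2 : ¬ ((m + 1) + 1 = m) := by omega
    have : Mt ⟨m + 1, h⟩ ⟨m, by omega⟩ = jacobiEntry lamt m := by
      simp [hMtdef, jacobiMat, h2]
    rw [this]
    exact jacobiEntry_pos lamt hlamt m (by omega)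
  have hdown : ∀ (m : ℕ) (h : m + 1 < N + 3),
      w ⟨m + 1, h⟩ = 0 → w ⟨m, by omega⟩ = 0 := by
    intro m h hz
    have := hzero _ hz ⟨m, by omega⟩
    exact (mul_eq_zero.mp this).resolve_left (ne_of_gt (hadj2 m h))
  have hup : ∀ (m : ℕ) (h : m + 1 < N + 3),
      w ⟨m, by omega⟩ = 0 → w ⟨m + 1, h⟩ = 0 := by
    intro m h hz
    have := hzero _ hz ⟨m + 1, h⟩
    exact (mul_eq_zero.mp this).resolve_left (ne_of_gt (hadj1 m h))
  -- positivity of w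
  have hwpos : ∀ p : Fin (N + 3), 0 < w p := by
    by_contra hcon
    push_neg at hcon
    obtain ⟨p, hp⟩ := hcon
    have hp0 : w p = 0 := le_antisymm hp (hw0 p)
    -- first get w 0 = 0 by descending
    have hdownall : ∀ (m : ℕ) (h : m < N + 3), w ⟨m, h⟩ = 0 → w ⟨0, by omega⟩ = 0 := by
      intro m
      induction m with
      | zero => intro h hz; exact hz
      | succ m ih =>
        intro h hz
        exact ih (by omega) (hdown m h hz)
    have h0 : w ⟨0, by omega⟩ = 0 := hdownall p.1 p.2 (by simpa using hp0)
    have hall : ∀ (m : ℕ) (h : m < N + 3), w ⟨m, h⟩ = 0 := by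
      intro m
      induction m with
      | zero => intro h; exact h0
      | succ m ih =>
        intro h
        exact hup m h (ih (by omega))
    -- contradiction with v ≠ 0
    apply hvne
    funext q
    have := hall q.1 q.2
    simp only [hwdef] at this
    have : |v q| = 0 := by simpa using this
    simpa using abs_eq_zero.mp this
  -- strict comparison of quadratic forms
  obtain ⟨k, hk⟩ := hlt
  have hkval : (k : ℕ) < N + 2 := k.2
  set p₀ : Fin (N + 3) := ⟨k, by omega⟩ with hp₀
  set q₀ : Fin (N + 3) := ⟨(k : ℕ) + 1, by omega⟩ with hq₀
  have hstrict_entry : Mt p₀ q₀ < M p₀ q₀ := by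
    have hM1 : M p₀ q₀ = jacobiEntry lam k := by simp [hMdef, jacobiMat, hp₀, hq₀]
    have hM2 : Mt p₀ q₀ = jacobiEntry lamt k := by simp [hMtdef, jacobiMat, hp₀, hq₀]
    rw [hM1, hM2]
    unfold jacobiEntry
    rw [dif_pos hkval, dif_pos hkval]
    have hkfin : (⟨(k : ℕ), hkval⟩ : Fin (N + 2)) = k := by ext; rfl
    rw [hkfin]
    have h1 := hlam k
    have hs1 : 0 < Real.sqrt (lam k) := Real.sqrt_pos.mpr h1
    have hs2 : Real.sqrt (lam k) < Real.sqrt (lamt k) := by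
      exact Real.sqrt_lt_sqrt h1.le hk
    exact inv_strictAnti₀ hs1 hs2
  have step7 : w ⬝ᵥ (Mt *ᵥ w) < w ⬝ᵥ (M *ᵥ w) := by
    rw [quad, quad]
    refine Finset.sum_lt_sum (fun p _ => Finset.sum_le_sum fun q _ => ?_)
      ⟨p₀, Finset.mem_univ p₀, ?_⟩
    · have h1 := jacobiMat_le lam lamt hlam hle p q
      have h2 : 0 ≤ w p * w q := mul_nonneg (hw0 p) (hw0 q)
      calc Mt p q * w p * w q = Mt p q * (w p * w q) := by ring
        _ ≤ M p q * (w p * w q) := mul_le_mul_of_nonneg_right h1 h2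
        _ = M p q * w p * w q := by ring
    · refine Finset.sum_lt_sum (fun q _ => ?_) ⟨q₀, Finset.mem_univ q₀, ?_⟩
      · have h1 := jacobiMat_le lam lamt hlam hle p₀ q
        have h2 : 0 ≤ w p₀ * w q := mul_nonneg (hw0 p₀) (hw0 q)
        calc Mt p₀ q * w p₀ * w q = Mt p₀ q * (w p₀ * w q) := by ring
          _ ≤ M p₀ q * (w p₀ * w q) := mul_le_mul_of_nonneg_right h1 h2
          _ = M p₀ q * w p₀ * w q := by ring
      · have h2 : 0 < w p₀ * w q₀ := mul_pos (hwpos p₀) (hwpos q₀)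
        calc Mt p₀ q₀ * w p₀ * w q₀ = Mt p₀ q₀ * (w p₀ * w q₀) := by ring
          _ < M p₀ q₀ * (w p₀ * w q₀) := (mul_lt_mul_of_pos_right hstrict_entry h2)
          _ = M p₀ q₀ * w p₀ * w q₀ := by ring
  have step8 : w ⬝ᵥ (M *ᵥ w) ≤ σ * (w ⬝ᵥ w) :=
    rayleigh_le (jacobiMat_isHermitian lam) σ hσmax w
  have hwwpos : 0 < w ⬝ᵥ w := by
    have := hwpos ⟨0, by omega⟩
    refine Finset.sum_pos' (fun i _ => mul_self_nonneg _) ⟨⟨0, by omega⟩, Finset.mem_univ _, ?_⟩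
    exact mul_pos this this
  have : σt * (w ⬝ᵥ w) < σ * (w ⬝ᵥ w) := by
    calc σt * (w ⬝ᵥ w) = w ⬝ᵥ (Mt *ᵥ w) := heqw.symm
      _ < w ⬝ᵥ (M *ᵥ w) := step7
      _ ≤ σ * (w ⬝ᵥ w) := step8
  exact lt_of_mul_lt_mul_right this hwwpos.le
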